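/- arXiv:2605.15596 — 2 statements merged into one kernel-verified Lean document; each statement's English description precedes it below -/
import Mathlib

section
/- For every φ ∈ (-1,1), the sequence ℓ ↦ ℓ·(η_ℓ(φ) - 1) converges to 2φ/(1-φ²) as ℓ → ∞, where η_ℓ(φ) = (ℓ - ℓφ²)/(2φ^{ℓ+1} - 2φ - ℓφ² + ℓ). -/
open Filter

/-- First-order correction of the AR(1) postcoloring coefficient converges to the
    AR(1) dependence ratio 2φ/(1-φ²). -/
theorem ar1_postcoloring_first_order (φ : ℝ) (h1 : -1 < φ) (h2 : φ < 1) :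
    Filter.Tendsto
      (fun ℓ : ℕ => (ℓ : ℝ) *
        (((ℓ : ℝ) - ℓ * φ ^ 2) / (2 * φ ^ (ℓ + 1) - 2 * φ - ℓ * φ ^ 2 + ℓ) - 1))
      Filter.atTop (nhds (2 * φ / (1 - φ ^ 2))) := by
  have habs : |φ| < 1 := abs_lt.mpr ⟨h1, h2⟩
  have hpos : 0 < 1 - φ ^ 2 := by nlinarith
  have hpow : Tendsto (fun ℓ : ℕ => φ ^ (ℓ + 1)) atTop (nhds 0) :=
    (tendsto_pow_atTop_nhds_zero_of_abs_lt_one habs).comp (tendsto_add_atTop_nat 1)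
  have hnum : Tendsto (fun ℓ : ℕ => 2 * φ - 2 * φ ^ (ℓ + 1)) atTop (nhds (2 * φ)) := by
    have := (tendsto_const_nhds (x := 2 * φ) (f := atTop (α := ℕ))).sub (hpow.const_mul 2)
    simpa using this
  have hinv : Tendsto (fun ℓ : ℕ => ((ℓ : ℝ))⁻¹) atTop (nhds 0) :=
    tendsto_inv_atTop_nhds_zero_nat
  have hsmall : Tendsto (fun ℓ : ℕ => (2 * φ ^ (ℓ + 1) - 2 * φ) / ℓ) atTop (nhds 0) := by
    have h1' : Tendsto (fun ℓ : ℕ => 2 * φ ^ (ℓ + 1) - 2 * φ) atTop (nhds (-(2 * φ))) := by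
      have := ((hpow.const_mul 2).sub (tendsto_const_nhds (x := 2 * φ)))
      simpa using this
    have := h1'.mul hinv
    simpa [div_eq_mul_inv] using this
  have hden : Tendsto (fun ℓ : ℕ => (1 - φ ^ 2) + (2 * φ ^ (ℓ + 1) - 2 * φ) / ℓ) atTop
      (nhds (1 - φ ^ 2)) := by
    have := (tendsto_const_nhds (x := 1 - φ ^ 2) (f := atTop (α := ℕ))).add hsmall
    simpa using this
  have hmain : Tendsto (fun ℓ : ℕ =>
      (2 * φ - 2 * φ ^ (ℓ + 1)) / ((1 - φ ^ 2) + (2 * φ ^ (ℓ + 1) - 2 * φ) / ℓ)) atTop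
      (nhds (2 * φ / (1 - φ ^ 2))) :=
    hnum.div hden (ne_of_gt hpos)
  refine hmain.congr' ?_
  have hev : ∀ᶠ ℓ : ℕ in atTop, 4 / (1 - φ ^ 2) < (ℓ : ℝ) :=
    tendsto_natCast_atTop_atTop.eventually (eventually_gt_atTop _)
  filter_upwards [hev, eventually_gt_atTop 0] with ℓ hℓ hℓ0
  have hℓpos : (0 : ℝ) < ℓ := by exact_mod_cast hℓ0
  have hb : -4 ≤ 2 * φ ^ (ℓ + 1) - 2 * φ := by
    have h1p : |φ ^ (ℓ + 1)| ≤ 1 := by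
      rw [abs_pow]; exact pow_le_one₀ (abs_nonneg _) habs.le
    have := abs_le.mp h1p
    nlinarith
  have hDpos : 0 < 2 * φ ^ (ℓ + 1) - 2 * φ - ℓ * φ ^ 2 + ℓ := by
    have h4 : 4 < (ℓ : ℝ) * (1 - φ ^ 2) := by
      rw [div_lt_iff₀ hpos] at hℓ; linarith
    nlinarith
  have hD : (2 * φ ^ (ℓ + 1) - 2 * φ - ℓ * φ ^ 2 + ℓ) ≠ 0 := ne_of_gt hDpos
  rw [show (1 - φ ^ 2) + (2 * φ ^ (ℓ + 1) - 2 * φ) / ℓ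
      = (2 * φ ^ (ℓ + 1) - 2 * φ - ℓ * φ ^ 2 + ℓ) / ℓ from by field_simp; ring,
    div_div_eq_mul_div]
  rw [div_sub_one hD]
  ring
end

section
/- Let (γ_k)_{k∈ℤ} be a real sequence with ∑_{k∈ℤ} |k|^p |γ_k| < ∞ for some p ∈ ℕ, and let K : ℝ → [-1,1] be an even function with K(0) = 1 such that B := lim_{t→0⁺} (K(t) - 1)/t^p exists in ℝ. Then ℓ^p · (∑_{k∈ℤ} γ_k − ∑_{k∈ℤ} K(k/ℓ) γ_k) → −B · ∑_{k∈ℤ} |k|^p γ_k as ℓ → ∞, provided additionally that sup_{t≥1} |K(t)|/t^p < ∞. -/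
open Filter Topology

/-- Leading smoothing bias of a p-th order kernel: v − M_{ℓ,K} = −B v_p / ℓ^p + o(ℓ^{-p}). -/
theorem kernel_smoothing_bias (γ : ℤ → ℝ) (p : ℕ) (hp : 1 ≤ p)
    (hγ : Summable (fun k : ℤ => (k.natAbs : ℝ) ^ p * |γ k|))
    (K : ℝ → ℝ) (hK1 : ∀ t, K t ∈ Set.Icc (-1 : ℝ) 1)
    (hKeven : ∀ t, K (-t) = K t) (hK0 : K 0 = 1)
    (B : ℝ)
    (hB : Filter.Tendsto (fun t : ℝ => (K t - 1) / t ^ p)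
      (nhdsWithin 0 (Set.Ioi 0)) (nhds B))
    (C : ℝ) (hC : ∀ t : ℝ, 1 ≤ t → |K t| ≤ C * t ^ p) :
    Filter.Tendsto
      (fun ℓ : ℕ => (ℓ : ℝ) ^ p *
        ((∑' k : ℤ, γ k) - ∑' k : ℤ, K ((k : ℝ) / (ℓ : ℝ)) * γ k))
      Filter.atTop (nhds (-B * ∑' k : ℤ, (k.natAbs : ℝ) ^ p * γ k)) := by
  -- |K t| ≤ 1 everywhere
  have hKabs : ∀ t, |K t| ≤ 1 := fun t => abs_le.2 ⟨(hK1 t).1, (hK1 t).2⟩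
  -- summability of γ
  have hγabs : Summable fun k : ℤ => |γ k| := by
    apply Summable.of_norm_bounded_eventually hγ
    have h0 : ({0} : Set ℤ).Finite := Set.finite_singleton 0
    filter_upwards [h0.compl_mem_cofinite] with k hk
    have hk0 : k ≠ 0 := by simpa using hk
    have h1 : (1 : ℝ) ≤ (k.natAbs : ℝ) ^ p := by
      have : 1 ≤ k.natAbs := Int.natAbs_pos.2 hk0
      exact one_le_pow₀ (by exact_mod_cast this)
    calc ‖|γ k|‖ = |γ k| := by simp [abs_abs, Real.norm_eq_abs]
      _ ≤ (k.natAbs : ℝ) ^ p * |γ k| := le_mul_of_one_le_left (abs_nonneg _) h1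
  have hγs : Summable γ := hγabs.of_norm_bounded (fun k => by simp [Real.norm_eq_abs])
  -- summability of kernel-weighted sums
  have hKγ : ∀ ℓ : ℕ, Summable fun k : ℤ => K ((k : ℝ) / (ℓ : ℝ)) * γ k := by
    intro ℓ
    apply hγabs.of_norm_bounded
    intro k
    rw [Real.norm_eq_abs, abs_mul]
    exact mul_le_of_le_one_left (abs_nonneg _) (hKabs _)
  -- global bound |K t - 1| ≤ M t^p for t > 0
  obtain ⟨δ, hδ0, hδ⟩ : ∃ δ > (0 : ℝ), ∀ t, 0 < t → t < δ → |(K t - 1) / t ^ p| ≤ |B| + 1 := by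
    have := hB.eventually (Metric.ball_mem_nhds B one_pos)
    rw [Filter.eventually_iff, mem_nhdsGT_iff_exists_Ioo_subset] at this
    obtain ⟨δ, hδ0, hδ⟩ := this
    refine ⟨δ, hδ0, fun t ht htδ => ?_⟩
    have := hδ ⟨ht, htδ⟩
    have h2 : |(K t - 1) / t ^ p - B| < 1 := by simpa [Real.dist_eq] using this
    have h3 : |(K t - 1) / t ^ p| - |B| ≤ |(K t - 1) / t ^ p - B| := abs_sub_abs_le_abs_sub _ _
    linarith

  -- global bound
  set δ' := min δ 1 with hδ'def
  have hδ'0 : 0 < δ' := lt_min hδ0 one_pos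
  set M : ℝ := max (|B| + 1) (max (2 / δ' ^ p) (C + 1)) with hMdef
  have hMb : ∀ t : ℝ, 0 < t → |K t - 1| ≤ M * t ^ p := by
    intro t ht
    have htp : (0:ℝ) < t ^ p := pow_pos ht p
    rcases lt_or_ge t δ' with h | h
    · have h1 := hδ t ht (h.trans_le (min_le_left _ _))
      rw [abs_div, abs_of_pos htp, div_le_iff₀ htp] at h1
      calc |K t - 1| ≤ (|B| + 1) * t ^ p := h1
        _ ≤ M * t ^ p := by
            apply mul_le_mul_of_nonneg_right (le_max_left _ _) htp.le
    · rcases le_or_gt t 1 with h1 | h1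
      · have h2 : |K t - 1| ≤ 2 := by
          have := hKabs t
          have h3 : |K t - 1| ≤ |K t| + 1 := by
            calc |K t - 1| ≤ |K t| + |(1:ℝ)| := abs_sub _ _
              _ = |K t| + 1 := by norm_num
          linarith
        have hδp : (0:ℝ) < δ' ^ p := pow_pos hδ'0 p
        have h4 : δ' ^ p ≤ t ^ p := pow_le_pow_left₀ hδ'0.le h p
        calc |K t - 1| ≤ 2 := h2
          _ = (2 / δ' ^ p) * δ' ^ p := by field_simp
          _ ≤ (2 / δ' ^ p) * t ^ p := by
              apply mul_le_mul_of_nonneg_left h4 (by positivity)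
          _ ≤ M * t ^ p := by
              apply mul_le_mul_of_nonneg_right ((le_max_left _ _).trans (le_max_right _ _)) htp.le
      · have h2 : |K t - 1| ≤ |K t| + 1 := by
          calc |K t - 1| ≤ |K t| + |(1:ℝ)| := abs_sub _ _
            _ = |K t| + 1 := by norm_num
        have h3 : (1:ℝ) ≤ t ^ p := one_le_pow₀ h1.le
        have h4 := hC t h1.le
        calc |K t - 1| ≤ C * t ^ p + 1 := by linarith
          _ ≤ C * t ^ p + t ^ p := by linarith
          _ = (C + 1) * t ^ p := by ring
          _ ≤ M * t ^ p := by
              apply mul_le_mul_of_nonneg_right ((le_max_right _ _).trans (le_max_right _ _)) htp.le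
  -- kernel evenness: replace k by |k|
  have hKk : ∀ (k : ℤ) (ℓ : ℕ),
      K ((k : ℝ) / (ℓ : ℝ)) = K ((k.natAbs : ℝ) / (ℓ : ℝ)) := by
    intro k ℓ
    have hcast : ((k.natAbs : ℝ)) = |(k : ℝ)| := by
      rw [Nat.cast_natAbs]; push_cast; ring
    rw [hcast]
    rcases abs_choice ((k:ℝ)) with h | h
    · rw [h]
    · rw [h, neg_div, hKeven]
  -- the rescaled summands
  set F : ℕ → ℤ → ℝ :=
    fun ℓ k => (ℓ : ℝ) ^ p * ((1 - K ((k : ℝ) / (ℓ : ℝ))) * γ k) with hFdef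
  have key : Filter.Tendsto (fun ℓ : ℕ => ∑' k : ℤ, F ℓ k) Filter.atTop
      (nhds (∑' k : ℤ, -B * ((k.natAbs : ℝ) ^ p * γ k))) := by
    apply tendsto_tsum_of_dominated_convergence
      (bound := fun k : ℤ => M * ((k.natAbs : ℝ) ^ p * |γ k|)) (hγ.mul_left M)
    · intro k
      rcases eq_or_ne k 0 with rfl | hk
      · have hz : ∀ ℓ : ℕ, F ℓ (0:ℤ) = 0 := by
          intro ℓ; simp [hFdef, hK0]
        have hz2 : -B * (((0:ℤ).natAbs : ℝ) ^ p * γ 0) = 0 := by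
          simp [zero_pow (Nat.one_le_iff_ne_zero.mp hp)]
        rw [hz2]
        exact Filter.Tendsto.congr (fun ℓ => (hz ℓ).symm) tendsto_const_nhds
      · have ha : (0:ℝ) < (k.natAbs : ℝ) := by
          have : 0 < k.natAbs := Int.natAbs_pos.2 hk
          exact_mod_cast this
        set a : ℝ := (k.natAbs : ℝ) with hadef
        have h1 : Filter.Tendsto (fun ℓ : ℕ => a / (ℓ : ℝ)) Filter.atTop
            (nhdsWithin 0 (Set.Ioi 0)) := by
          rw [tendsto_nhdsWithin_iff]
          constructor
          · exact tendsto_const_div_atTop_nhds_zero_nat a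
          · filter_upwards [Filter.eventually_gt_atTop 0] with ℓ hℓ
            have : (0:ℝ) < (ℓ:ℝ) := by exact_mod_cast hℓ
            exact div_pos ha this
        have h2 : Filter.Tendsto
            (fun ℓ : ℕ => -a ^ p * ((K (a / (ℓ:ℝ)) - 1) / (a / (ℓ:ℝ)) ^ p) * γ k)
            Filter.atTop (nhds (-a ^ p * B * γ k)) :=
          ((hB.comp h1).const_mul (-a ^ p)).mul_const (γ k)
        have heq : ∀ᶠ ℓ : ℕ in Filter.atTop,
            -a ^ p * ((K (a / (ℓ:ℝ)) - 1) / (a / (ℓ:ℝ)) ^ p) * γ k = F ℓ k := by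
          filter_upwards [Filter.eventually_gt_atTop 0] with ℓ hℓ
          have hℓ0 : (0:ℝ) < (ℓ:ℝ) := by exact_mod_cast hℓ
          have ht : (0:ℝ) < a / ℓ := div_pos ha hℓ0
          have htp : (a / (ℓ:ℝ)) ^ p ≠ 0 := (pow_pos ht p).ne'
          rw [hFdef]
          simp only [hKk k ℓ, ← hadef]
          rw [div_pow] at htp ⊢
          field_simp
          ring
        have hval : -a ^ p * B * γ k = -B * ((k.natAbs : ℝ) ^ p * γ k) := by
          rw [← hadef]; ring
        rw [← hval]
        exact Filter.Tendsto.congr' heq h2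
    · filter_upwards [Filter.eventually_gt_atTop 0] with ℓ hℓ
      intro k
      rcases eq_or_ne k 0 with rfl | hk
      · have : F ℓ (0:ℤ) = 0 := by simp [hFdef, hK0]
        rw [this]
        simp only [norm_zero]
        positivity
      · have hℓ0 : (0:ℝ) < (ℓ:ℝ) := by exact_mod_cast hℓ
        have ha : (0:ℝ) < (k.natAbs : ℝ) := by
          have : 0 < k.natAbs := Int.natAbs_pos.2 hk
          exact_mod_cast this
        have ht : (0:ℝ) < (k.natAbs : ℝ) / (ℓ:ℝ) := div_pos ha hℓ0
        have hb := hMb _ ht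
        have hM0 : (0:ℝ) ≤ M := le_trans (by positivity) (le_max_left _ _)
        have hstep : ‖F ℓ k‖ = (ℓ:ℝ) ^ p * (|K ((k.natAbs : ℝ) / (ℓ:ℝ)) - 1| * |γ k|) := by
          rw [hFdef]
          simp only [hKk k ℓ]
          rw [Real.norm_eq_abs, abs_mul, abs_mul, abs_of_nonneg (by positivity : (0:ℝ) ≤ (ℓ:ℝ)^p),
            abs_sub_comm]
        rw [hstep]
        calc (ℓ:ℝ) ^ p * (|K ((k.natAbs : ℝ) / (ℓ:ℝ)) - 1| * |γ k|)
            ≤ (ℓ:ℝ) ^ p * ((M * ((k.natAbs : ℝ) / (ℓ:ℝ)) ^ p) * |γ k|) := by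
              apply mul_le_mul_of_nonneg_left _ (by positivity)
              exact mul_le_mul_of_nonneg_right hb (abs_nonneg _)
          _ = M * ((k.natAbs : ℝ) ^ p * |γ k|) := by
              rw [div_pow]
              field_simp
  -- assemble
  have hsum : ∑' k : ℤ, -B * ((k.natAbs : ℝ) ^ p * γ k)
      = -B * ∑' k : ℤ, (k.natAbs : ℝ) ^ p * γ k := tsum_mul_left
  rw [hsum] at key
  apply key.congr
  intro ℓ
  rw [← Summable.tsum_sub hγs (hKγ ℓ), ← tsum_mul_left]
  exact tsum_congr fun k => by rw [hFdef]; ring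
end
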